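/- Let n ≥ 1, let M ∈ ℝ^{n×n} be a symmetric positive semidefinite matrix, and let J = {J_1, …, J_t} be a partition of {1,…,n} such that for every q, q' ∈ {1,…,t}, the sum ∑_{j'∈J_{q'}} M_{jj'} takes the same value for all j ∈ J_q. Then for every x ∈ ℝ^n, (1/2) xᵀMx ≥ (1/2) x̂ᵀMx̂, where x̂ is the J-average of x. -/

import Mathlib

open Matrix

/-- The `J`-average of a vector `x`, where the partition of `{1,…,n}` is encoded by a
surjective map `π : Fin n → Fin t` (the class `J_q` is the fiber `π ⁻¹ {q}`):
`x̂ j = (1/|J_{π j}|) ∑_{j' ∈ J_{π j}} x j'`. -/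
noncomputable def Javg {n t : ℕ} (π : Fin n → Fin t) (x : Fin n → ℝ) : Fin n → ℝ :=
  fun j => (∑ j' ∈ Finset.univ.filter (fun j' => π j' = π j), x j') /
    ((Finset.univ.filter (fun j' => π j' = π j)).card : ℝ)

/-- If `M` is symmetric positive semidefinite and, for every pair of classes `J_q, J_{q'}`,
the row sums `∑_{j'∈J_{q'}} M j j'` are constant over `j ∈ J_q`, then
`(1/2) xᵀMx ≥ (1/2) x̂ᵀMx̂` for the `J`-average `x̂` of `x`. -/
theorem javg_quadratic_le {n t : ℕ} (hn : 1 ≤ n)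
    (π : Fin n → Fin t) (hπ : Function.Surjective π)
    (M : Matrix (Fin n) (Fin n) ℝ) (hM : M.PosSemidef)
    (hMsum : ∀ (q' : Fin t) (j j₂ : Fin n), π j = π j₂ →
      ∑ j' ∈ Finset.univ.filter (fun j' => π j' = q'), M j j' =
      ∑ j' ∈ Finset.univ.filter (fun j' => π j' = q'), M j₂ j')
    (x : Fin n → ℝ) :
    (1 / 2) * ((Javg π x) ⬝ᵥ M.mulVec (Javg π x)) ≤ (1 / 2) * (x ⬝ᵥ M.mulVec x) := by
  set y := Javg π x with hy
  set z : Fin n → ℝ := fun j => x j - y j with hz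
  set f : Fin t → ℝ := fun q => (∑ j' ∈ Finset.univ.filter (fun j' => π j' = q), x j') /
    ((Finset.univ.filter (fun j' => π j' = q)).card : ℝ) with hf
  have hyf : ∀ j, y j = f (π j) := fun j => rfl
  have hcard : ∀ q : Fin t, 0 < (Finset.univ.filter (fun j' => π j' = q)).card := by
    intro q
    obtain ⟨j, hj⟩ := hπ q
    exact Finset.card_pos.2 ⟨j, by simp [hj]⟩
  -- sum of y over a fiber equals sum of x over the fiber
  have hysum : ∀ q : Fin t,
      ∑ j ∈ Finset.univ.filter (fun j' => π j' = q), y j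
      = ∑ j ∈ Finset.univ.filter (fun j' => π j' = q), x j := by
    intro q
    have h1 : ∀ j ∈ Finset.univ.filter (fun j' => π j' = q), y j = f q := by
      intro j hj
      simp only [Finset.mem_filter] at hj
      rw [hyf, hj.2]
    rw [Finset.sum_congr rfl h1, Finset.sum_const, nsmul_eq_mul, hf]
    rw [mul_div_cancel₀]
    exact Nat.cast_ne_zero.2 (hcard q).ne'
  -- z is orthogonal to every fiber-constant vector
  have hperp : ∀ v : Fin n → ℝ, (∀ j j₂, π j = π j₂ → v j = v j₂) →
      z ⬝ᵥ v = 0 := by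
    intro v hv
    have h0 : z ⬝ᵥ v = ∑ q : Fin t,
        ∑ j ∈ Finset.univ.filter (fun j' => π j' = q), z j * v j := by
      rw [dotProduct]
      exact (Finset.sum_fiberwise _ _ _).symm
    rw [h0]
    apply Finset.sum_eq_zero
    intro q _
    obtain ⟨j₀, hj₀⟩ := hπ q
    have h1 : ∀ j ∈ Finset.univ.filter (fun j' => π j' = q), z j * v j = z j * v j₀ := by
      intro j hj
      simp only [Finset.mem_filter] at hj
      rw [hv j j₀ (by rw [hj.2, hj₀])]
    rw [Finset.sum_congr rfl h1, ← Finset.sum_mul]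
    have h2 : ∑ j ∈ Finset.univ.filter (fun j' => π j' = q), z j = 0 := by
      simp only [hz]
      rw [Finset.sum_sub_distrib, hysum q, sub_self]
    rw [h2, zero_mul]
  -- M.mulVec y is fiber-constant
  have hMy : ∀ j j₂, π j = π j₂ → (M.mulVec y) j = (M.mulVec y) j₂ := by
    intro j j₂ h
    have key : ∀ i : Fin n, (M.mulVec y) i
        = ∑ q : Fin t, (∑ j' ∈ Finset.univ.filter (fun j' => π j' = q), M i j') * f q := by
      intro i
      rw [Matrix.mulVec, dotProduct]
      rw [← Finset.sum_fiberwise Finset.univ π (fun j' => M i j' * y j')]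
      apply Finset.sum_congr rfl
      intro q _
      rw [Finset.sum_mul]
      apply Finset.sum_congr rfl
      intro j' hj'
      simp only [Finset.mem_filter] at hj'
      rw [hyf, hj'.2]
    rw [key j, key j₂]
    apply Finset.sum_congr rfl
    intro q _
    rw [hMsum q j j₂ h]
  -- symmetry of the bilinear form
  have hsymm : ∀ i j : Fin n, M i j = M j i := by
    intro i j
    have := congrFun (congrFun hM.1 i) j
    simpa [Matrix.conjTranspose_apply] using this.symm
  have h2 : y ⬝ᵥ M.mulVec z = z ⬝ᵥ M.mulVec y := by
    simp only [dotProduct, Matrix.mulVec, dotProduct, Finset.mul_sum, Finset.sum_mul]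
    rw [Finset.sum_comm]
    apply Finset.sum_congr rfl; intro i _
    apply Finset.sum_congr rfl; intro j _
    rw [hsymm i j]; ring
  have hxyz : x = fun j => y j + z j := by funext j; simp [hz]
  have hdecomp : x ⬝ᵥ M.mulVec x = y ⬝ᵥ M.mulVec y + z ⬝ᵥ M.mulVec z := by
    rw [hxyz]
    have : M.mulVec (fun j => y j + z j) = fun i => M.mulVec y i + M.mulVec z i := by
      funext i
      simp [Matrix.mulVec, dotProduct, mul_add, Finset.sum_add_distrib]
    rw [this]
    simp only [dotProduct]
    have expand : ∑ i, (y i + z i) * (M.mulVec y i + M.mulVec z i)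
        = (y ⬝ᵥ M.mulVec y) + (y ⬝ᵥ M.mulVec z) + (z ⬝ᵥ M.mulVec y) + (z ⬝ᵥ M.mulVec z) := by
      simp only [dotProduct]
      rw [← Finset.sum_add_distrib, ← Finset.sum_add_distrib, ← Finset.sum_add_distrib]
      apply Finset.sum_congr rfl; intro i _; ring
    rw [expand, h2, hperp _ hMy]
    simp [dotProduct]
  have hzz : 0 ≤ z ⬝ᵥ M.mulVec z := by
    have := hM.dotProduct_mulVec_nonneg z
    simpa using this
  have : y ⬝ᵥ M.mulVec y ≤ x ⬝ᵥ M.mulVec x := by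
    rw [hdecomp]; linarith
  linarith
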